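/- Let d = d₁·D with d₁, D ≥ 2, and for each b = 0…d₁ let B_b = {v_b(v) ⊗ w_b(v, v̄) : v = 1…d₁, v̄ = 1…D} be an orthonormal basis of ℂ^{d₁} ⊗ ℂ^{D}, where {v_b(v) : v = 1…d₁} is an orthonormal basis of ℂ^{d₁} and, for each b and v, {w_b(v, v̄) : v̄ = 1…D} is an orthonormal basis of ℂ^{D}. Assume the d₁+1 bases B₀, …, B_{d₁} are pairwise mutually unbiased. If a unit vector μ ∈ ℂ^{d₁} ⊗ ℂ^{D} is mutually unbiased to every B_b (|⟨v_b(v) ⊗ w_b(v, v̄), μ⟩|² = 1/d for all b, v, v̄), then μ is maximally entangled across ℂ^{d₁} ⊗ ℂ^{D}: the partial trace of |μ⟩⟨μ| over the second factor equals (1/d₁)·𝟙 on ℂ^{d₁}. -/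

import Mathlib

open scoped ComplexInnerProductSpace

/-- The tensor product of two vectors, realized concretely on `EuclideanSpace`:
`(a ⊗ b) (i, j) = a i * b j`. -/
noncomputable def eprod {ι γ : Type*} (a : EuclideanSpace ℂ ι) (b : EuclideanSpace ℂ γ) :
    EuclideanSpace ℂ (ι × γ) :=
  WithLp.toLp 2 (fun p : ι × γ => a p.1 * b p.2)

/-- The reduced density matrix of the pure state `μ` of a bipartite system, i.e. the
partial trace of the projector `|μ⟩⟨μ|` over the second tensor factor. -/
noncomputable def reducedDensityMatrix {ι γ : Type*} [Fintype γ]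
    (μ : EuclideanSpace ℂ (ι × γ)) : Matrix ι ι ℂ :=
  Matrix.of fun i j => ∑ k, μ (i, k) * star (μ (j, k))

/-! ### Auxiliary lemmas -/

lemma euclid_sum_apply {ι κ : Type*} (s : Finset κ) (f : κ → EuclideanSpace ℂ ι) (i : ι) :
    (∑ k ∈ s, f k) i = ∑ k ∈ s, f k i := by
  induction s using Finset.cons_induction with
  | empty => rfl
  | cons a s ha ih => rw [Finset.sum_cons, Finset.sum_cons, ← ih]; rfl

lemma conj_mul_self_of_norm_sq {z : ℂ} {c : ℝ} (h : ‖z‖ ^ 2 = c) :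
    (starRingEnd ℂ) z * z = (c : ℂ) := by
  rw [← h, Complex.sq_norm]
  exact (Complex.normSq_eq_conj_mul_self).symm

open Finset in
lemma eprod_inner {ι γ : Type*} [Fintype ι] [Fintype γ]
    (a a' : EuclideanSpace ℂ ι) (b b' : EuclideanSpace ℂ γ) :
    ⟪eprod a b, eprod a' b'⟫ = ⟪a, a'⟫ * ⟪b, b'⟫ := by
  simp only [PiLp.inner_apply, RCLike.inner_apply, eprod, PiLp.toLp_apply]
  rw [Finset.sum_mul_sum]
  rw [← Finset.sum_product']
  simp only [Finset.univ_product_univ]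
  apply Finset.sum_congr rfl
  intro p _
  simp [map_mul]
  ring

lemma parseval {n : ℕ} [NeZero n] {e : Fin n → EuclideanSpace ℂ (Fin n)}
    (he : Orthonormal ℂ e) (f : EuclideanSpace ℂ (Fin n)) :
    ∑ i, (starRingEnd ℂ) ⟪e i, f⟫ * ⟪e i, f⟫ = ⟪f, f⟫ := by
  have hsp : ⊤ ≤ Submodule.span ℂ (Set.range e) := by
    rw [he.linearIndependent.span_eq_top_of_card_eq_finrank]
    · simp [finrank_euclideanSpace]
  let b : OrthonormalBasis (Fin n) ℂ (EuclideanSpace ℂ (Fin n)) := OrthonormalBasis.mk he hsp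
  have := b.sum_inner_mul_inner f f
  simp only [OrthonormalBasis.coe_mk, b] at this
  rw [← this]
  apply Finset.sum_congr rfl
  intro i _
  rw [← inner_conj_symm f (e i)]

lemma eprod_inner_right {ι γ : Type*} [Fintype ι] [Fintype γ]
    (a : EuclideanSpace ℂ ι) (c : EuclideanSpace ℂ γ) (μ : EuclideanSpace ℂ (ι × γ)) :
    ⟪eprod a c, μ⟫ =
      ⟪c, (WithLp.toLp 2 (fun k => ∑ i, (starRingEnd ℂ) (a i) * μ (i, k)) : EuclideanSpace ℂ γ)⟫ := by
  simp only [PiLp.inner_apply, RCLike.inner_apply, eprod, PiLp.toLp_apply, Fintype.sum_prod_type]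
  rw [Finset.sum_comm]
  apply Finset.sum_congr rfl
  intro k _
  rw [Finset.sum_mul]
  apply Finset.sum_congr rfl
  intro i _
  simp only [map_mul]
  ring

/-- The outer product `|u⟩⟨u|` as a vector in `EuclideanSpace ℂ (ι × ι)`. -/
noncomputable def outerV {ι : Type*} (u : EuclideanSpace ℂ ι) : EuclideanSpace ℂ (ι × ι) :=
  WithLp.toLp 2 (fun p : ι × ι => u p.1 * (starRingEnd ℂ) (u p.2))

lemma inner_outerV {ι : Type*} [Fintype ι] (u u' : EuclideanSpace ℂ ι) :
    ⟪outerV u, outerV u'⟫ = ⟪u, u'⟫ * (starRingEnd ℂ) ⟪u, u'⟫ := by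
  simp only [PiLp.inner_apply, RCLike.inner_apply, outerV, PiLp.toLp_apply, Fintype.sum_prod_type, map_sum, map_mul,
    Complex.conj_conj, Finset.sum_mul_sum]
  apply Finset.sum_congr rfl; intro i _
  apply Finset.sum_congr rfl; intro j _
  ring

/-- The identity matrix as a vector in `EuclideanSpace ℂ (ι × ι)`. -/
noncomputable def idV (ι : Type*) [DecidableEq ι] : EuclideanSpace ℂ (ι × ι) :=
  WithLp.toLp 2 (fun p : ι × ι => if p.1 = p.2 then (1 : ℂ) else 0)

lemma inner_id_left {ι : Type*} [Fintype ι] [DecidableEq ι] (X : EuclideanSpace ℂ (ι × ι)) :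
    ⟪idV ι, X⟫ = ∑ i, X (i, i) := by
  simp only [PiLp.inner_apply, RCLike.inner_apply, idV, PiLp.toLp_apply, Fintype.sum_prod_type, apply_ite,
    map_one, map_zero, ite_mul, one_mul, zero_mul, mul_ite, mul_one, mul_zero]
  apply Finset.sum_congr rfl
  intro i _
  rw [Finset.sum_ite_eq (Finset.univ : Finset ι) i (fun j => X (i, j))]
  simp

/-- The reduced density matrix as a vector in `EuclideanSpace ℂ (ι × ι)`. -/
noncomputable def rdm {ι γ : Type*} [Fintype γ] (μ : EuclideanSpace ℂ (ι × γ)) :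
    EuclideanSpace ℂ (ι × ι) :=
  WithLp.toLp 2 (fun p : ι × ι => ∑ k, μ (p.1, k) * star (μ (p.2, k)))

/-- The `k`-th column of `μ`, as a vector in `EuclideanSpace ℂ ι`. -/
noncomputable def colv {ι γ : Type*} (μ : EuclideanSpace ℂ (ι × γ)) (k : γ) :
    EuclideanSpace ℂ ι :=
  WithLp.toLp 2 (fun i => μ (i, k))

lemma rdm_eq_sum {ι γ : Type*} [Fintype γ] (μ : EuclideanSpace ℂ (ι × γ)) :
    rdm μ = ∑ k, outerV (colv μ k) := by
  ext p
  rw [euclid_sum_apply]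
  simp [rdm, outerV, colv, Complex.star_def]

/-- The all-ones vector. -/
noncomputable def onesE (n : ℕ) : EuclideanSpace ℂ (Fin n) := WithLp.toLp 2 (fun _ => 1)

/-! ### Main theorem -/

/-- Let `B_b = {v_b(v) ⊗ w_b(v, v̄)}`, `b = 0…d₁`, be `d₁ + 1` pairwise mutually unbiased
orthonormal bases of `ℂ^{d₁} ⊗ ℂ^D`, each built from an orthonormal basis `{v_b(v)}` of
`ℂ^{d₁}` and, for each `v`, an orthonormal basis `{w_b(v, v̄)}` of `ℂ^D`. Any unit vector
`μ` mutually unbiased to every `B_b` is maximally entangled: its reduced density matrix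
on the first factor is `(1/d₁)·𝟙`. -/
theorem vector_MU_to_maximal_product_set_is_maximally_entangled
    {d₁ D : ℕ} (hd₁ : 2 ≤ d₁) (hD : 2 ≤ D)
    (v : Fin (d₁ + 1) → Fin d₁ → EuclideanSpace ℂ (Fin d₁))
    (w : Fin (d₁ + 1) → Fin d₁ → Fin D → EuclideanSpace ℂ (Fin D))
    (hv : ∀ b, Orthonormal ℂ (v b))
    (hw : ∀ b x, Orthonormal ℂ (w b x))
    (hON : ∀ b, Orthonormal ℂ (fun p : Fin d₁ × Fin D => eprod (v b p.1) (w b p.1 p.2)))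
    (hMU : ∀ b b', b ≠ b' → ∀ (x y : Fin d₁) (x' y' : Fin D),
      ‖⟪eprod (v b x) (w b x x'), eprod (v b' y) (w b' y y')⟫‖ ^ 2 =
        1 / ((d₁ * D : ℕ) : ℝ))
    (μ : EuclideanSpace ℂ (Fin d₁ × Fin D)) (hμ : ‖μ‖ = 1)
    (hμMU : ∀ b (x : Fin d₁) (x' : Fin D),
      ‖⟪eprod (v b x) (w b x x'), μ⟫‖ ^ 2 = 1 / ((d₁ * D : ℕ) : ℝ)) :
    reducedDensityMatrix μ = ((d₁ : ℂ))⁻¹ • (1 : Matrix (Fin d₁) (Fin d₁) ℂ) := by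
  classical
  have hd1pos : 0 < d₁ := by omega
  have hDpos : 0 < D := by omega
  haveI : NeZero d₁ := ⟨by omega⟩
  haveI : NeZero D := ⟨by omega⟩
  have hcd1 : (d₁ : ℂ) ≠ 0 := Nat.cast_ne_zero.mpr (by omega)
  have hcD : (D : ℂ) ≠ 0 := Nat.cast_ne_zero.mpr (by omega)
  have harith : (D : ℂ) * (((1 / ((d₁ * D : ℕ) : ℝ)) : ℝ) : ℂ) = (d₁ : ℂ)⁻¹ := by
    push_cast
    field_simp
  -- orthonormality of the `v b` as `ite`
  have hvite : ∀ b x y, ⟪v b x, v b y⟫ = if x = y then 1 else 0 :=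
    fun b => orthonormal_iff_ite.mp (hv b)
  have hwite : ∀ b x x' y', ⟪w b x x', w b x y'⟫ = if x' = y' then 1 else 0 :=
    fun b x => orthonormal_iff_ite.mp (hw b x)
  -- Step 1 : the bases `v b` of the first factor are pairwise mutually unbiased
  have hvMU : ∀ b b', b ≠ b' → ∀ x y,
      ⟪v b x, v b' y⟫ * (starRingEnd ℂ) ⟪v b x, v b' y⟫ = (d₁ : ℂ)⁻¹ := by
    intro b b' hbb' x y
    have hpar := parseval (hw b' y) (w b x 0)
    have hone : ⟪w b x 0, w b x 0⟫ = (1 : ℂ) := by simpa using hwite b x 0 0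
    have hterm : ∀ y' : Fin D,
        ((starRingEnd ℂ) ⟪v b x, v b' y⟫ * ⟪v b x, v b' y⟫) *
          ((starRingEnd ℂ) ⟪w b' y y', w b x 0⟫ * ⟪w b' y y', w b x 0⟫) =
          (((1 / ((d₁ * D : ℕ) : ℝ)) : ℝ) : ℂ) := by
      intro y'
      have h2 := conj_mul_self_of_norm_sq (hMU b b' hbb' x y 0 y')
      rw [eprod_inner] at h2
      have h3 : ⟪w b' y y', w b x 0⟫ = (starRingEnd ℂ) ⟪w b x 0, w b' y y'⟫ :=
        (inner_conj_symm _ _).symm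
      rw [h3, ← h2]
      simp only [map_mul, Complex.conj_conj]
      ring
    have h5 : (starRingEnd ℂ) ⟪v b x, v b' y⟫ * ⟪v b x, v b' y⟫ =
        ∑ _y' : Fin D, (((1 / ((d₁ * D : ℕ) : ℝ)) : ℝ) : ℂ) := by
      calc (starRingEnd ℂ) ⟪v b x, v b' y⟫ * ⟪v b x, v b' y⟫
          = ((starRingEnd ℂ) ⟪v b x, v b' y⟫ * ⟪v b x, v b' y⟫) * ⟪w b x 0, w b x 0⟫ := by
            rw [hone, mul_one]
        _ = ((starRingEnd ℂ) ⟪v b x, v b' y⟫ * ⟪v b x, v b' y⟫) *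
              ∑ y', (starRingEnd ℂ) ⟪w b' y y', w b x 0⟫ * ⟪w b' y y', w b x 0⟫ := by
            rw [hpar]
        _ = ∑ y', ((starRingEnd ℂ) ⟪v b x, v b' y⟫ * ⟪v b x, v b' y⟫) *
              ((starRingEnd ℂ) ⟪w b' y y', w b x 0⟫ * ⟪w b' y y', w b x 0⟫) := by
            rw [Finset.mul_sum]
        _ = _ := Finset.sum_congr rfl fun y' _ => hterm y'
    rw [mul_comm, h5, Finset.sum_const, Finset.card_univ, Fintype.card_fin, nsmul_eq_mul,
      harith]
  -- Step 2 : inner products of outer products of basis vectors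
  have hPP_same : ∀ b x y, ⟪outerV (v b x), outerV (v b y)⟫ = if x = y then 1 else 0 := by
    intro b x y
    rw [inner_outerV, hvite]
    split <;> simp
  have hPP_diff : ∀ b b', b ≠ b' → ∀ x y,
      ⟪outerV (v b x), outerV (v b' y)⟫ = (d₁ : ℂ)⁻¹ := by
    intro b b' hbb' x y
    rw [inner_outerV]
    exact hvMU b b' hbb' x y
  -- Step 3 : inner products with the identity
  have hIdId : ⟪idV (Fin d₁), idV (Fin d₁)⟫ = (d₁ : ℂ) := by
    rw [inner_id_left]
    simp [idV]
  have hIdP : ∀ b x, ⟪idV (Fin d₁), outerV (v b x)⟫ = 1 := by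
    intro b x
    rw [inner_id_left]
    have : ∑ i, outerV (v b x) (i, i) = (starRingEnd ℂ) ⟪v b x, v b x⟫ := by
      simp only [outerV, PiLp.inner_apply, RCLike.inner_apply, map_sum, map_mul,
        Complex.conj_conj]
      exact Finset.sum_congr rfl fun i _ => mul_comm _ _
    rw [this, hvite]
    simp
  have hPId : ∀ b x, ⟪outerV (v b x), idV (Fin d₁)⟫ = 1 := by
    intro b x
    rw [← inner_conj_symm, hIdP b x, map_one]
  -- Step 4 : inner products with the reduced density matrix
  have hIdρ : ⟪idV (Fin d₁), rdm μ⟫ = 1 := by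
    rw [inner_id_left]
    have h1 : ⟪μ, μ⟫ = (1 : ℂ) := by
      rw [inner_self_eq_norm_sq_to_K, hμ]
      norm_num
    rw [← h1]
    simp only [rdm, PiLp.inner_apply, RCLike.inner_apply, Fintype.sum_prod_type,
      Complex.star_def]
  have hPρ : ∀ b x, ⟪outerV (v b x), rdm μ⟫ = (d₁ : ℂ)⁻¹ := by
    intro b x
    rw [rdm_eq_sum, inner_sum]
    simp only [inner_outerV]
    set g : EuclideanSpace ℂ (Fin D) :=
      WithLp.toLp 2 (fun k => ∑ i, (starRingEnd ℂ) (v b x i) * μ (i, k)) with hgdef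
    have hg : ∀ k, ⟪v b x, colv μ k⟫ = g k := by
      intro k
      simp [PiLp.inner_apply, RCLike.inner_apply, colv, hgdef]
      exact Finset.sum_congr rfl fun i _ => mul_comm _ _
    have hgg : ∑ k, ⟪v b x, colv μ k⟫ * (starRingEnd ℂ) ⟪v b x, colv μ k⟫ = ⟪g, g⟫ := by
      simp only [hg, PiLp.inner_apply, RCLike.inner_apply]
    have hterm : ∀ x' : Fin D, (starRingEnd ℂ) ⟪w b x x', g⟫ * ⟪w b x x', g⟫ =
        (((1 / ((d₁ * D : ℕ) : ℝ)) : ℝ) : ℂ) := by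
      intro x'
      have h1 : ⟪eprod (v b x) (w b x x'), μ⟫ = ⟪w b x x', g⟫ := eprod_inner_right _ _ _
      rw [← h1]
      exact conj_mul_self_of_norm_sq (hμMU b x x')
    rw [hgg, ← parseval (hw b x) g, Finset.sum_congr rfl fun x' _ => hterm x',
      Finset.sum_const, Finset.card_univ, Fintype.card_fin, nsmul_eq_mul, harith]
  -- Step 5 : the orthonormal family spanning the whole matrix space
  set W : Submodule ℂ (EuclideanSpace ℂ (Fin d₁)) := (ℂ ∙ (onesE d₁))ᗮ with hWdef
  have hones0 : onesE d₁ ≠ 0 := by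
    intro h
    have := congrArg (fun f : EuclideanSpace ℂ (Fin d₁) => f ⟨0, hd1pos⟩) h
    simp [onesE] at this
  have hWrank : Module.finrank ℂ W = d₁ - 1 := by
    apply Submodule.finrank_add_finrank_orthogonal' (K := ℂ ∙ (onesE d₁))
    rw [finrank_span_singleton hones0, finrank_euclideanSpace]
    simp
    omega
  set lam : Fin (Module.finrank ℂ W) → EuclideanSpace ℂ (Fin d₁) :=
    fun k => ((stdOrthonormalBasis ℂ W) k : EuclideanSpace ℂ (Fin d₁)) with hlamdef
  have hlam_ite : ∀ k k', ⟪lam k, lam k'⟫ = if k = k' then 1 else 0 := by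
    intro k k'
    rw [hlamdef]
    rw [← Submodule.coe_inner]
    exact orthonormal_iff_ite.mp (stdOrthonormalBasis ℂ W).orthonormal k k'
  have hlam_sum : ∀ k, ∑ x, lam k x = 0 := by
    intro k
    have hmem : (lam k : EuclideanSpace ℂ (Fin d₁)) ∈ W := ((stdOrthonormalBasis ℂ W) k).2
    have h0 : ⟪onesE d₁, (lam k : EuclideanSpace ℂ (Fin d₁))⟫ = 0 :=
      (Submodule.mem_orthogonal _ _).mp hmem (onesE d₁) (Submodule.mem_span_singleton_self _)
    simpa [PiLp.inner_apply, RCLike.inner_apply, onesE] using h0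
  have hlam_csum : ∀ k, ∑ x, (starRingEnd ℂ) (lam k x) = 0 := by
    intro k
    rw [← map_sum, hlam_sum, map_zero]
  -- the scalar normalizing the identity
  set c : ℂ := (((Real.sqrt d₁)⁻¹ : ℝ) : ℂ) with hcdef
  have hcc : c * c * (d₁ : ℂ) = 1 := by
    rw [hcdef, ← Complex.ofReal_mul, ← mul_inv, Real.mul_self_sqrt (by positivity)]
    push_cast
    field_simp
  have hcconj : (starRingEnd ℂ) c = c := by rw [hcdef, Complex.conj_ofReal]
  -- the family
  set F : (Unit ⊕ (Fin (d₁ + 1) × Fin (Module.finrank ℂ W))) →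
      EuclideanSpace ℂ (Fin d₁ × Fin d₁) :=
    Sum.elim (fun _ => c • idV (Fin d₁))
      (fun bk => ∑ x, lam bk.2 x • outerV (v bk.1 x)) with hFdef
  have hF_on : Orthonormal ℂ F := by
    rw [orthonormal_iff_ite]
    rintro (_ | ⟨b, k⟩) (_ | ⟨b', k'⟩)
    · simp only [hFdef, Sum.elim_inl]
      rw [inner_smul_left, inner_smul_right, hIdId, hcconj]
      have h9 : c * (c * (d₁ : ℂ)) = 1 := by rw [← mul_assoc]; exact hcc
      rw [h9]
      simp
    · simp only [hFdef, Sum.elim_inl, Sum.elim_inr]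
      rw [inner_sum]
      simp only [inner_smul_left, inner_smul_right, hIdP, mul_one]
      rw [← Finset.sum_mul, hlam_sum, zero_mul]
      simp
    · simp only [hFdef, Sum.elim_inl, Sum.elim_inr]
      rw [sum_inner]
      simp only [inner_smul_left, inner_smul_right, hPId, mul_one]
      rw [← Finset.mul_sum, hlam_csum, mul_zero]
      simp
    · simp only [hFdef, Sum.elim_inr]
      rw [sum_inner]
      simp only [inner_sum, inner_smul_left, inner_smul_right]
      by_cases hbb' : b = b'
      · subst hbb'
        have hstep : ∀ x, ∑ y, lam k' y *
            ((starRingEnd ℂ) (lam k x) * ⟪outerV (v b x), outerV (v b y)⟫) =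
            (starRingEnd ℂ) (lam k x) * lam k' x := by
          intro x
          rw [Finset.sum_eq_single x]
          · rw [hPP_same, if_pos rfl]; ring
          · intro y _ hyx
            rw [hPP_same, if_neg (Ne.symm hyx), mul_zero, mul_zero]
          · intro h; exact absurd (Finset.mem_univ x) h
        rw [Finset.sum_congr rfl fun x _ => hstep x]
        have hil : ∑ x, (starRingEnd ℂ) (lam k x) * lam k' x = ⟪lam k, lam k'⟫ := by
          simp [PiLp.inner_apply, RCLike.inner_apply]
          exact Finset.sum_congr rfl fun i _ => mul_comm _ _
        rw [hil, hlam_ite]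
        simp [Prod.ext_iff]
      · have hstep : ∀ x, ∑ y, lam k' y *
            ((starRingEnd ℂ) (lam k x) * ⟪outerV (v b x), outerV (v b' y)⟫) = 0 := by
          intro x
          have hc9 : ∀ y ∈ (Finset.univ : Finset (Fin d₁)),
              lam k' y * ((starRingEnd ℂ) (lam k x) * ⟪outerV (v b x), outerV (v b' y)⟫) =
              lam k' y * ((starRingEnd ℂ) (lam k x) * (d₁ : ℂ)⁻¹) := fun y _ => by
            rw [hPP_diff b b' hbb']
          rw [Finset.sum_congr rfl hc9, ← Finset.sum_mul, hlam_sum, zero_mul]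
        rw [Finset.sum_congr rfl fun x _ => hstep x, Finset.sum_const_zero]
        simp [hbb']
  -- Step 6 : cardinality and spanning
  have hcard : Fintype.card (Unit ⊕ (Fin (d₁ + 1) × Fin (Module.finrank ℂ W))) =
      Module.finrank ℂ (EuclideanSpace ℂ (Fin d₁ × Fin d₁)) := by
    rw [finrank_euclideanSpace]
    rw [Fintype.card_sum, Fintype.card_prod, Fintype.card_prod, Fintype.card_fin,
      Fintype.card_fin, Fintype.card_unit, hWrank, Fintype.card_fin]
    obtain ⟨e, rfl⟩ : ∃ e, d₁ = e + 2 := ⟨d₁ - 2, by omega⟩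
    simp only [show e + 2 - 1 = e + 1 from rfl]
    ring
  have hspan : ⊤ ≤ Submodule.span ℂ (Set.range F) := by
    rw [hF_on.linearIndependent.span_eq_top_of_card_eq_finrank hcard]
  -- Step 7 : orthogonality of `A := rdm μ - d₁⁻¹ • idV` to the family
  set A : EuclideanSpace ℂ (Fin d₁ × Fin d₁) := rdm μ - (d₁ : ℂ)⁻¹ • idV (Fin d₁) with hAdef
  have hFA : ∀ j, ⟪F j, A⟫ = 0 := by
    rintro (_ | ⟨b, k⟩)
    · simp only [hFdef, Sum.elim_inl, hAdef]
      rw [inner_smul_left, inner_sub_right, inner_smul_right, hIdρ, hIdId,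
        inv_mul_cancel₀ hcd1, sub_self, mul_zero]
    · simp only [hFdef, Sum.elim_inr, hAdef]
      rw [sum_inner]
      apply Finset.sum_eq_zero
      intro x _
      rw [inner_smul_left, inner_sub_right, inner_smul_right, hPρ, hPId, mul_one,
        sub_self, mul_zero]
  have hAF : ∀ j, ⟪A, F j⟫ = 0 := by
    intro j
    rw [← inner_conj_symm, hFA j, map_zero]
  have hA0 : A = 0 := by
    have hle : Submodule.span ℂ (Set.range F) ≤ LinearMap.ker (innerSL ℂ A).toLinearMap := by
      rw [Submodule.span_le]
      rintro _ ⟨j, rfl⟩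
      simp only [SetLike.mem_coe, LinearMap.mem_ker, ContinuousLinearMap.coe_coe, innerSL_apply_apply]
      exact hAF j
    have hmem : A ∈ LinearMap.ker (innerSL ℂ A).toLinearMap :=
      hle (hspan Submodule.mem_top)
    have : ⟪A, A⟫ = 0 := by
      simpa only [LinearMap.mem_ker, ContinuousLinearMap.coe_coe, innerSL_apply_apply] using hmem
    exact inner_self_eq_zero.mp this
  -- Step 8 : conclusion
  have hfin : rdm μ = (d₁ : ℂ)⁻¹ • idV (Fin d₁) := sub_eq_zero.mp hA0
  ext i j
  have h1 : reducedDensityMatrix μ i j = rdm μ (i, j) := rfl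
  have h2 := congrArg (fun f : EuclideanSpace ℂ (Fin d₁ × Fin d₁) => f (i, j)) hfin
  rw [h1, h2]
  simp only [PiLp.smul_apply, idV, smul_eq_mul, Matrix.smul_apply, Matrix.one_apply]
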